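/- Let a ∈ G, let d be a decision rule, and let t ∈ [0,1] satisfy μ(p(X) = t) = 0 and μ(p(X) ≥ t | g(X) = a) = E[d(X) | g(X) = a]. Then E[1{p(X) ≥ t}·(1 − d(X)) | g(X) = a] = E[1{p(X) < t}·d(X) | g(X) = a]; moreover this common value equals 0 if and only if d(X) = 1{p(X) ≥ t} almost surely on the event {g(X) = a}. -/

import Mathlib

open MeasureTheory ProbabilityTheory Set

noncomputable section

/-- if `t ∈ [0,1]` satisfies `μ(p(X) = t) = 0` and
`μ(p(X) ≥ t | g(X) = a) = E[d(X) | g(X) = a]`, then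
`E[1{p(X) ≥ t}(1 − d(X)) | g(X) = a] = E[1{p(X) < t} d(X) | g(X) = a]`, and this
common value is `0` iff `d(X) = 1{p(X) ≥ t}` a.s. on the event `{g(X) = a}`. -/
theorem stmt_12
    {Ω 𝒳 G : Type*} [MeasurableSpace Ω] [MeasurableSpace 𝒳]
    [Fintype G] [MeasurableSpace G] [MeasurableSingletonClass G]
    (μ : Measure Ω) [IsProbabilityMeasure μ]
    (X : Ω → 𝒳) (hX : Measurable X)
    (Y : Ω → ℝ) (hY : Measurable Y) (hY01 : ∀ ω, Y ω = 0 ∨ Y ω = 1)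
    (p : 𝒳 → ℝ) (hp : Measurable p) (hp01 : ∀ x, p x ∈ Icc (0:ℝ) 1)
    (g : 𝒳 → G) (hg : Measurable g)
    (hgpos : ∀ a : G, 0 < μ {ω | g (X ω) = a})
    (a : G)
    (d : 𝒳 → ℝ) (hd : Measurable d) (hd01 : ∀ x, d x ∈ Icc (0:ℝ) 1)
    (t : ℝ) (ht : t ∈ Icc (0:ℝ) 1)
    (hatom : μ {ω | p (X ω) = t} = 0)
    (hrate : (μ ({ω | t ≤ p (X ω)} ∩ {ω | g (X ω) = a})).toReal
          / (μ {ω | g (X ω) = a}).toReal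
        = (∫ ω in {ω | g (X ω) = a}, d (X ω) ∂μ) / (μ {ω | g (X ω) = a}).toReal) :
    ((∫ ω in {ω | g (X ω) = a},
          (if t ≤ p (X ω) then (1:ℝ) else 0) * (1 - d (X ω)) ∂μ)
        / (μ {ω | g (X ω) = a}).toReal
      = (∫ ω in {ω | g (X ω) = a},
          (if p (X ω) < t then (1:ℝ) else 0) * d (X ω) ∂μ)
        / (μ {ω | g (X ω) = a}).toReal) ∧
    ((∫ ω in {ω | g (X ω) = a},
          (if t ≤ p (X ω) then (1:ℝ) else 0) * (1 - d (X ω)) ∂μ)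
        / (μ {ω | g (X ω) = a}).toReal = 0
      ↔ ∀ᵐ ω ∂μ, g (X ω) = a →
          d (X ω) = (if t ≤ p (X ω) then (1:ℝ) else 0)) := by
  classical
  set A : Set Ω := {ω | g (X ω) = a} with hAdef
  have hAm : MeasurableSet A := by
    have : A = (fun ω => g (X ω)) ⁻¹' {a} := rfl
    rw [this]; exact (hg.comp hX) (measurableSet_singleton a)
  set S : Set Ω := {ω | t ≤ p (X ω)} with hSdef
  have hSm : MeasurableSet S := measurableSet_le measurable_const (hp.comp hX)
  set I : Ω → ℝ := fun ω => if t ≤ p (X ω) then (1:ℝ) else 0 with hIdef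
  set J : Ω → ℝ := fun ω => if p (X ω) < t then (1:ℝ) else 0 with hJdef
  set D : Ω → ℝ := fun ω => d (X ω) with hDdef
  have hImeas : Measurable I := Measurable.ite hSm measurable_const measurable_const
  have hJmeas : Measurable J :=
    Measurable.ite (measurableSet_lt (hp.comp hX) measurable_const)
      measurable_const measurable_const
  have hDmeas : Measurable D := hd.comp hX
  -- integrability helper
  have hint : ∀ f : Ω → ℝ, Measurable f → (∀ ω, |f ω| ≤ 1) →
      Integrable f (μ.restrict A) := by
    intro f hf hb
    exact Integrable.mono' (integrable_const 1) hf.aestronglyMeasurable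
      (Filter.Eventually.of_forall hb)
  have hd0 : ∀ ω, 0 ≤ D ω := fun ω => (hd01 (X ω)).1
  have hd1 : ∀ ω, D ω ≤ 1 := fun ω => (hd01 (X ω)).2
  have hIint : Integrable I (μ.restrict A) := by
    refine hint I hImeas fun ω => ?_
    simp only [hIdef]; split <;> simp
  have hDint : Integrable D (μ.restrict A) := by
    refine hint D hDmeas fun ω => ?_
    rw [abs_of_nonneg (hd0 ω)]; exact hd1 ω
  have hIDint : Integrable (fun ω => I ω * D ω) (μ.restrict A) := by
    refine hint _ (hImeas.mul hDmeas) fun ω => ?_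
    simp only [hIdef]
    split
    · rw [one_mul, abs_of_nonneg (hd0 ω)]; exact hd1 ω
    · simp
  have hJI : ∀ ω, J ω = 1 - I ω := by
    intro ω
    simp only [hIdef, hJdef]
    by_cases h : t ≤ p (X ω)
    · rw [if_pos h, if_neg (not_lt.mpr h)]; ring
    · rw [if_neg h, if_pos (not_le.mp h)]; ring
  -- integral of I over A
  have hIeq : ∫ ω in A, I ω ∂μ = (μ (S ∩ A)).toReal := by
    have : I = Set.indicator S (fun _ => (1:ℝ)) := by
      ext ω
      simp only [hIdef, Set.indicator, hSdef, Set.mem_setOf_eq]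
    rw [this, integral_indicator hSm, setIntegral_const, smul_eq_mul, mul_one,
      measureReal_def, Measure.restrict_apply hSm]
  have hcpos : 0 < (μ A).toReal :=
    ENNReal.toReal_pos (hgpos a).ne' (measure_ne_top μ A)
  have hnum : (μ (S ∩ A)).toReal = ∫ ω in A, D ω ∂μ :=
    (div_left_inj' hcpos.ne').mp hrate
  have h1 : ∫ ω in A, I ω * (1 - D ω) ∂μ
      = (∫ ω in A, I ω ∂μ) - ∫ ω in A, I ω * D ω ∂μ := by
    rw [← integral_sub hIint hIDint]
    apply integral_congr_ae
    filter_upwards with ω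
    ring
  have h2 : ∫ ω in A, J ω * D ω ∂μ
      = (∫ ω in A, D ω ∂μ) - ∫ ω in A, I ω * D ω ∂μ := by
    rw [← integral_sub hDint hIDint]
    apply integral_congr_ae
    filter_upwards with ω
    rw [hJI ω]; ring
  have hmain : ∫ ω in A, I ω * (1 - D ω) ∂μ = ∫ ω in A, J ω * D ω ∂μ := by
    rw [h1, h2, hIeq, hnum]
  refine ⟨by rw [hmain], ?_⟩
  -- part 2
  have hI1nn : ∀ ω, 0 ≤ I ω * (1 - D ω) := by
    intro ω; simp only [hIdef]
    split
    · rw [one_mul]; linarith [hd1 ω]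
    · simp
  have hJDnn : ∀ ω, 0 ≤ J ω * D ω := by
    intro ω; simp only [hJdef]
    split
    · rw [one_mul]; exact hd0 ω
    · simp
  have hI1int : Integrable (fun ω => I ω * (1 - D ω)) (μ.restrict A) := by
    refine hint _ (hImeas.mul (measurable_const.sub hDmeas)) fun ω => ?_
    rw [abs_of_nonneg (hI1nn ω)]
    simp only [hIdef]
    split
    · rw [one_mul]; linarith [hd0 ω]
    · simp
  have hJDint : Integrable (fun ω => J ω * D ω) (μ.restrict A) := by
    refine hint _ (hJmeas.mul hDmeas) fun ω => ?_
    rw [abs_of_nonneg (hJDnn ω)]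
    simp only [hJdef]
    split
    · rw [one_mul]; exact hd1 ω
    · simp
  have hz1 : (∫ ω in A, I ω * (1 - D ω) ∂μ) = 0
      ↔ (fun ω => I ω * (1 - D ω)) =ᵐ[μ.restrict A] 0 :=
    integral_eq_zero_iff_of_nonneg hI1nn hI1int
  have hz2 : (∫ ω in A, J ω * D ω ∂μ) = 0
      ↔ (fun ω => J ω * D ω) =ᵐ[μ.restrict A] 0 :=
    integral_eq_zero_iff_of_nonneg hJDnn hJDint
  have hdiv : (∫ ω in A, I ω * (1 - D ω) ∂μ) / (μ A).toReal = 0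
      ↔ (∫ ω in A, I ω * (1 - D ω) ∂μ) = 0 := by
    rw [div_eq_zero_iff]
    constructor
    · rintro (h | h)
      · exact h
      · exact absurd h hcpos.ne'
    · exact Or.inl
  rw [hdiv]
  constructor
  · intro h0
    have he1 := hz1.mp h0
    have he2 := hz2.mp (hmain ▸ h0)
    have hcomb := he1.and he2
    rw [Filter.EventuallyEq, ae_restrict_iff' hAm] at he1 he2
    filter_upwards [he1, he2] with ω h1' h2' hga
    have hωA : ω ∈ A := hga
    have e1 := h1' hωA
    have e2 := h2' hωA
    simp only [Pi.zero_apply] at e1 e2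
    by_cases h : t ≤ p (X ω)
    · rw [if_pos h]
      have : I ω = 1 := by simp [hIdef, if_pos h]
      rw [this, one_mul] at e1
      linarith
    · rw [if_neg h]
      have : J ω = 1 := by simp [hJdef, if_pos (not_le.mp h)]
      rw [this, one_mul] at e2
      exact e2
  · intro hae
    rw [hz1, Filter.EventuallyEq, ae_restrict_iff' hAm]
    filter_upwards [hae] with ω hω hωA
    have hga : g (X ω) = a := hωA
    have hDω : D ω = I ω := hω hga
    simp only [Pi.zero_apply]
    rw [hDω]
    simp only [hIdef]
    split <;> ring
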